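/- Let $f : \mathbb{R}^n \to \mathbb{R}$ be a real analytic function that is not identically zero. Then its zero set $\{w \in \mathbb{R}^n \mid f(w) = 0\}$ has Lebesgue measure zero. -/
import Mathlib
open MeasureTheory Set
open scoped Topology

lemma countable_zeros (f : ℝ → ℝ) (hf : AnalyticOnNhd ℝ f Set.univ)
    (hne : ∃ x, f x ≠ 0) : {x : ℝ | f x = 0}.Countable := by
  rcases hf.eqOn_zero_or_eventually_ne_zero_of_preconnected isPreconnected_univ with h | h
  · obtain ⟨x, hx⟩ := hne
    exact absurd (h (mem_univ x)) hx
  · set Z := {x : ℝ | f x = 0} with hZ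
    have hmem : {x : ℝ | f x ≠ 0} ∈ Filter.codiscreteWithin univ := h
    rw [mem_codiscreteWithin] at hmem
    have : DiscreteTopology Z := by
      rw [discreteTopology_subtype_iff]
      intro x _
      have hx' := hmem x (mem_univ x)
      have hd : univ \ {x : ℝ | f x ≠ 0} = Z := by
        ext z; simp [hZ]
      rw [hd] at hx'
      exact hx'.eq_bot
    exact Set.countable_coe_iff.mp (TopologicalSpace.separableSpace_iff_countable.mp inferInstance)

theorem stmt_1 (n : ℕ) (f : (Fin n → ℝ) → ℝ)
    (hf : AnalyticOnNhd ℝ f Set.univ)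
    (hne : ∃ w, f w ≠ 0) :
    volume {w : Fin n → ℝ | f w = 0} = 0 := by
  induction n with
  | zero =>
    obtain ⟨w, hw⟩ := hne
    have : {w : Fin 0 → ℝ | f w = 0} = ∅ := by
      ext z
      simp only [mem_setOf_eq, mem_empty_iff_false, iff_false]
      have : z = w := Subsingleton.elim _ _
      rw [this]; exact hw
    simp [this]
  | succ n ih =>
    -- the measurable equiv with ℝ × (Fin n → ℝ)
    set e := MeasurableEquiv.piFinSuccAbove (fun _ : Fin (n+1) => ℝ) 0 with he
    have mp := volume_preserving_piFinSuccAbove (fun _ : Fin (n+1) => ℝ) 0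
    have hfc : Continuous f := continuousOn_univ.mp (hf.continuousOn)
    have hZm : MeasurableSet {w : Fin (n+1) → ℝ | f w = 0} :=
      (isClosed_eq hfc continuous_const).measurableSet
    -- reduce to product measure
    have key : volume {w : Fin (n+1) → ℝ | f w = 0}
        = (volume : Measure (ℝ × (Fin n → ℝ))) (⇑e.symm ⁻¹' {w | f w = 0}) :=
      ((MeasurePreserving.symm e mp).measure_preimage hZm.nullMeasurableSet).symm
    rw [key]
    have hsymm : ∀ (x : ℝ) (y : Fin n → ℝ), e.symm (x, y) = Fin.cons x y := by
      intro x y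
      simp [he, MeasurableEquiv.piFinSuccAbove, Fin.insertNthEquiv]
    set S : Set (ℝ × (Fin n → ℝ)) := ⇑e.symm ⁻¹' {w | f w = 0} with hS
    have hSm : MeasurableSet S := e.symm.measurable hZm
    rw [show (volume : Measure (ℝ × (Fin n → ℝ))) = (volume : Measure ℝ).prod volume from rfl]
    rw [MeasureTheory.Measure.measure_prod_null hSm]
    -- analyticity of slices
    set L : (Fin n → ℝ) →L[ℝ] (Fin (n+1) → ℝ) :=
      ContinuousLinearMap.pi (fun j => Fin.cases 0 (fun i => ContinuousLinearMap.proj i) j) with hL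
    have hcons : ∀ (x : ℝ) (y : Fin n → ℝ), Fin.cons x y = Fin.cons x (0 : Fin n → ℝ) + L y := by
      intro x y
      funext j
      refine Fin.cases ?_ (fun i => ?_) j <;> simp [hL]
    have hslice : ∀ x : ℝ, AnalyticOnNhd ℝ (fun y : Fin n → ℝ => f (Fin.cons x y)) Set.univ := by
      intro x
      have : AnalyticOnNhd ℝ (fun y : Fin n → ℝ => (Fin.cons x (0 : Fin n → ℝ) + L y : Fin (n+1) → ℝ)) univ :=
        analyticOnNhd_const.add (L.analyticOnNhd univ)
      have h2 := hf.comp this (mapsTo_univ _ _)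
      refine h2.congr isOpen_univ ?_
      intro y _
      simp only [Function.comp]
      rw [← hcons x y]
    -- find y₀ with nonzero slice in x
    have hxy : ∃ x₀ y₀, f (Fin.cons x₀ y₀) ≠ 0 := by
      by_contra hc
      push_neg at hc
      obtain ⟨w, hw⟩ := hne
      exact hw (by simpa [Fin.cons_self_tail] using hc (w 0) (Fin.tail w))
    obtain ⟨x₀, y₀, hx₀⟩ := hxy
    -- g := x ↦ f (cons x y₀) analytic, not identically zero
    set E₀ : Fin (n+1) → ℝ := Fin.cons 1 (0 : Fin n → ℝ) with hE₀
    have hconsx : ∀ x : ℝ, (Fin.cons x y₀ : Fin (n+1) → ℝ) = Fin.cons 0 y₀ + x • E₀ := by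
      intro x
      funext j
      refine Fin.cases ?_ (fun i => ?_) j <;> simp [hE₀]
    have hg : AnalyticOnNhd ℝ (fun x : ℝ => f (Fin.cons x y₀)) Set.univ := by
      have h1 : AnalyticOnNhd ℝ (fun x : ℝ => (Fin.cons 0 y₀ + x • E₀ : Fin (n+1) → ℝ)) univ :=
        analyticOnNhd_const.add (analyticOnNhd_id.smul analyticOnNhd_const)
      have h2 := hf.comp h1 (mapsTo_univ _ _)
      refine h2.congr isOpen_univ ?_
      intro x _
      simp only [Function.comp]
      rw [← hconsx x]
    have hgz : volume {x : ℝ | f (Fin.cons x y₀) = 0} = 0 :=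
      (countable_zeros _ hg ⟨x₀, hx₀⟩).measure_zero _
    -- a.e. x, the slice has measure zero
    have : ∀ x : ℝ, f (Fin.cons x y₀) ≠ 0 → volume (Prod.mk x ⁻¹' S) = 0 := by
      intro x hx
      have hpre : Prod.mk x ⁻¹' S = {y : Fin n → ℝ | f (Fin.cons x y) = 0} := by
        ext y
        simp [hS, hsymm]
      rw [hpre]
      exact ih (fun y => f (Fin.cons x y)) (hslice x) ⟨y₀, hx⟩
    have hae : ∀ᵐ x : ℝ, f (Fin.cons x y₀) ≠ 0 := by
      rw [MeasureTheory.ae_iff]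
      simpa using hgz
    filter_upwards [hae] with x hx
    exact this x hx
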